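/- In the patch exploration sampling setting, for every deterministic n ≥ 0, P(Y_{I∖𝒜_n} ∈ · | U_0,…,U_{n−1}) = P(X_{I∖𝒜_n} ∈ · | X_{𝒜_n} = Y_{𝒜_n}) almost surely. -/

import Mathlib

open MeasureTheory ProbabilityTheory
open scoped ENNReal

noncomputable section
set_option linter.unusedSectionVars false

/-- The configuration `Y` built by the patch exploration after `k` steps: at step `k+1`
the coordinates in `𝒱_{k+1} = 𝒜_{k+1} ∖ 𝒜_k` are sampled using the sampling function
`F` applied to the uniform variable `u (k+1)`, conditionally on the already explored
configuration. -/
def patchY {I : Type*} [DecidableEq I] {𝒳 : I → Type*}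
    (A : ℕ → (ℕ → ℝ) → Finset I)
    (F : Finset I → Finset I → (∀ x, 𝒳 x) → ℝ → ∀ x, 𝒳 x)
    (y₀ : ∀ x, 𝒳 x) (u : ℕ → ℝ) : ℕ → ∀ x, 𝒳 x
  | 0 => y₀
  | k + 1 => fun x =>
      if x ∈ A (k + 1) u \ A k u then
        F (A k u) (A (k + 1) u \ A k u) (patchY A F y₀ u k) (u (k + 1)) x
      else patchY A F y₀ u k x

section aux
variable {I : Type*} [Fintype I] [DecidableEq I]
  {𝒳 : I → Type*} [∀ x, Fintype (𝒳 x)] [∀ x, MeasurableSpace (𝒳 x)]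
  [∀ x, DiscreteMeasurableSpace (𝒳 x)]
  (A : ℕ → (ℕ → ℝ) → Finset I)
  (F : Finset I → Finset I → (∀ x, 𝒳 x) → ℝ → ∀ x, 𝒳 x)
  (y₀ : ∀ x, 𝒳 x)

lemma patchY_prefix (hAprefix : ∀ k u u', (∀ i < k, u i = u' i) → A k u = A k u')
    (k : ℕ) (u u' : ℕ → ℝ) (h : ∀ i ≤ k, u i = u' i) :
    patchY A F y₀ u k = patchY A F y₀ u' k := by
  induction k with
  | zero => rfl
  | succ k ih =>
    have h' : ∀ i ≤ k, u i = u' i := fun i hi => h i (hi.trans (Nat.le_succ k))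
    have hAk : A k u = A k u' := hAprefix k u u' (fun i hi => h' i hi.le)
    have hAk1 : A (k+1) u = A (k+1) u' := hAprefix (k+1) u u' (fun i hi => h i hi.le)
    have hY : patchY A F y₀ u k = patchY A F y₀ u' k := ih h'
    funext x
    show (if x ∈ A (k + 1) u \ A k u then
        F (A k u) (A (k + 1) u \ A k u) (patchY A F y₀ u k) (u (k + 1)) x
      else patchY A F y₀ u k x) = _
    rw [hAk, hAk1, hY, h (k+1) le_rfl]
    rfl


lemma A_mono_of_le (hAmono : ∀ k u, A k u ⊆ A (k + 1) u)
    (u : ℕ → ℝ) {m k : ℕ} (h : m ≤ k) : A m u ⊆ A k u := by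
  induction k, h using Nat.le_induction with
  | base => exact fun _ h => h
  | succ k hk ih => exact ih.trans (hAmono k u)

lemma patchY_stable (hAmono : ∀ k u, A k u ⊆ A (k + 1) u)
    (u : ℕ → ℝ) {m k : ℕ} (h : m ≤ k) :
    ∀ x ∈ A m u, patchY A F y₀ u k x = patchY A F y₀ u m x := by
  induction k, h using Nat.le_induction with
  | base => intro x _; rfl
  | succ k hk ih =>
    intro x hx
    show (if x ∈ A (k + 1) u \ A k u then _ else _) = _
    rw [if_neg (by simp [A_mono_of_le A hAmono u hk hx]), ih x hx]

lemma patchY_stable_top {Tstar : ℕ} (hAmono : ∀ k u, A k u ⊆ A (k + 1) u)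
    (hT : ∀ k u, Tstar ≤ k → A k u = Finset.univ)
    (u : ℕ → ℝ) {m : ℕ} (h : Tstar ≤ m) :
    patchY A F y₀ u m = patchY A F y₀ u Tstar := by
  funext x
  exact patchY_stable A F y₀ hAmono u h x (by simp [hT Tstar u le_rfl])


lemma patchY_succ (u : ℕ → ℝ) (k : ℕ) :
    patchY A F y₀ u (k+1) = fun x =>
      if x ∈ A (k + 1) u \ A k u then
        F (A k u) (A (k + 1) u \ A k u) (patchY A F y₀ u k) (u (k + 1)) x
      else patchY A F y₀ u k x := rfl

lemma measurableSet_patchY_eq (hAmeas : ∀ k (J : Finset I), MeasurableSet {u : ℕ → ℝ | A k u = J})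
    (hFmeas : ∀ Λ J ξ, Measurable (F Λ J ξ)) :
    ∀ (k : ℕ) (ξ : ∀ x, 𝒳 x), MeasurableSet {u : ℕ → ℝ | patchY A F y₀ u k = ξ} := by
  intro k
  induction k with
  | zero =>
    intro ξ
    by_cases h : y₀ = ξ
    · convert MeasurableSet.univ
      ext u; simpa [patchY] using h
    · convert MeasurableSet.empty
      ext u; simpa [patchY] using h
  | succ k ih =>
    intro ξ
    have hrw : {u : ℕ → ℝ | patchY A F y₀ u (k+1) = ξ} =
        ⋃ (Λ : Finset I) (B : Finset I) (ζ : ∀ x, 𝒳 x),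
          ({u : ℕ → ℝ | A k u = Λ} ∩ {u | A (k+1) u = B} ∩ {u | patchY A F y₀ u k = ζ} ∩
            (fun u : ℕ → ℝ => u (k+1)) ⁻¹'
              {t : ℝ | (fun x => if x ∈ B \ Λ then F Λ (B \ Λ) ζ t x else ζ x) = ξ}) := by
      ext u
      simp only [Set.mem_iUnion, Set.mem_inter_iff, Set.mem_setOf_eq, Set.mem_preimage]
      constructor
      · intro h
        exact ⟨A k u, A (k+1) u, patchY A F y₀ u k, ⟨⟨rfl, rfl⟩, rfl⟩, h⟩
      · rintro ⟨Λ, B, ζ, ⟨⟨h1, h2⟩, h3⟩, h4⟩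
        rw [patchY_succ, h1, h2, h3]
        exact h4
    rw [hrw]
    refine MeasurableSet.iUnion fun Λ => MeasurableSet.iUnion fun B =>
      MeasurableSet.iUnion fun ζ => ?_
    refine (((hAmeas k Λ).inter (hAmeas (k+1) B)).inter (ih ζ)).inter ?_
    refine (measurable_pi_apply (k+1)) ?_
    have hg : Measurable (fun t : ℝ => fun x => if x ∈ B \ Λ then F Λ (B \ Λ) ζ t x else ζ x) := by
      refine measurable_pi_lambda _ fun x => ?_
      by_cases hx : x ∈ B \ Λ
      · simp only [hx, if_true]
        exact (measurable_pi_apply x).comp (hFmeas Λ (B \ Λ) ζ)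
      · simp only [hx, if_false]
        exact measurable_const
    exact hg (MeasurableSet.singleton ξ)

lemma measurableSet_pattern (hAmeas : ∀ k (J : Finset I), MeasurableSet {u : ℕ → ℝ | A k u = J})
    (hFmeas : ∀ Λ J ξ, Measurable (F Λ J ξ)) (k l m : ℕ)
    (P : Finset I → Finset I → (∀ x, 𝒳 x) → Prop) :
    MeasurableSet {u : ℕ → ℝ | P (A k u) (A l u) (patchY A F y₀ u m)} := by
  have hrw : {u : ℕ → ℝ | P (A k u) (A l u) (patchY A F y₀ u m)} =
      ⋃ (Λ : Finset I) (B : Finset I) (ζ : ∀ x, 𝒳 x),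
        {u : ℕ → ℝ | (A k u = Λ ∧ A l u = B ∧ patchY A F y₀ u m = ζ) ∧ P Λ B ζ} := by
    ext u
    simp only [Set.mem_iUnion, Set.mem_setOf_eq]
    constructor
    · intro h; exact ⟨_, _, _, ⟨rfl, rfl, rfl⟩, h⟩
    · rintro ⟨Λ, B, ζ, ⟨h1, h2, h3⟩, h⟩
      rw [h1, h2, h3]; exact h
  rw [hrw]
  refine MeasurableSet.iUnion fun Λ => MeasurableSet.iUnion fun B =>
    MeasurableSet.iUnion fun ζ => ?_
  by_cases h : P Λ B ζ
  · simp only [h, and_true]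
    exact (hAmeas k Λ).inter ((hAmeas l B).inter (measurableSet_patchY_eq A F y₀ hAmeas hFmeas m ζ))
  · simp [h]

/-- extension of a finite tuple by zero -/
def extT {m : ℕ} (v : Fin m → ℝ) : ℕ → ℝ := fun j => if h : j < m then v ⟨j, h⟩ else 0

lemma measurable_extT (m : ℕ) : Measurable (fun v : Fin m → ℝ => extT v) := by
  refine measurable_pi_lambda _ fun j => ?_
  by_cases h : j < m
  · simpa [extT, h] using measurable_pi_apply (⟨j, h⟩ : Fin m)
  · simpa [extT, h] using measurable_const

lemma extT_agree {m : ℕ} (u : ℕ → ℝ) (i : ℕ) (hi : i < m) :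
    extT (fun j : Fin m => u j) i = u i := by simp [extT, hi]


variable {Ω : Type*} [MeasurableSpace Ω] (μ : Measure Ω) (U : ℕ → Ω → ℝ)

lemma onestep (hUmeas : ∀ n, Measurable (U n))
    (hUindep : iIndepFun U μ) (n : ℕ)
    (S₀ : Set (Fin (n+1) → ℝ)) (hS₀ : MeasurableSet S₀) (T : Set ℝ) (hT : MeasurableSet T) :
    μ ({ω | (fun i : Fin (n+1) => U i ω) ∈ S₀} ∩ U (n+1) ⁻¹' T)
      = μ {ω | (fun i : Fin (n+1) => U i ω) ∈ S₀} * μ (U (n+1) ⁻¹' T) := by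
  have hind : IndepFun (fun ω => (fun i : Fin (n+1) => U i ω)) (U (n+1)) μ := by
    have h := hUindep.indepFun_finset (Finset.range (n+1)) {n+1}
      (by simp +contextual [Finset.disjoint_left, Nat.ne_of_lt]) hUmeas
    have h2 := h.comp
      (φ := fun g : (Finset.range (n+1) : Finset ℕ) → ℝ =>
        fun i : Fin (n+1) => g ⟨(i : ℕ), Finset.mem_range.mpr i.isLt⟩)
      (ψ := fun g : ({n+1} : Finset ℕ) → ℝ => g ⟨n+1, Finset.mem_singleton_self _⟩)
      (measurable_pi_lambda _ fun i => measurable_pi_apply _)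
      (measurable_pi_apply _ : Measurable fun g : ({n+1} : Finset ℕ) → ℝ =>
        g ⟨n+1, Finset.mem_singleton_self _⟩)
    exact h2
  exact hind.measure_inter_preimage_eq_mul S₀ T hS₀ hT

/-- the type indexing exploration pieces -/
abbrev PieceIdx (I : Type*) (𝒳 : I → Type*) := Finset I × Finset I × (∀ x, 𝒳 x)

def pieceU (n : ℕ) (t : PieceIdx I 𝒳) : Set (ℕ → ℝ) :=
  {u | A n u = t.1 ∧ A (n+1) u = t.2.1 ∧ patchY A F y₀ u n = t.2.2}

lemma measurableSet_pieceU (hAmeas : ∀ k (J : Finset I), MeasurableSet {u : ℕ → ℝ | A k u = J})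
    (hFmeas : ∀ Λ J ξ, Measurable (F Λ J ξ)) (n : ℕ) (t : PieceIdx I 𝒳) :
    MeasurableSet (pieceU A F y₀ n t) :=
  measurableSet_pattern A F y₀ hAmeas hFmeas n (n+1) n
    (fun Λ B ζ => Λ = t.1 ∧ B = t.2.1 ∧ ζ = t.2.2)

lemma pieceU_disjoint (n : ℕ) : Pairwise (Function.onFun Disjoint (pieceU A F y₀ n)) := by
  intro t t' htt'
  rw [Function.onFun, Set.disjoint_left]
  rintro u ⟨h1, h2, h3⟩ ⟨h1', h2', h3'⟩
  exact htt' (by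
    ext1
    · rw [← h1, h1']
    · ext1
      · rw [← h2, h2']
      · rw [← h3, h3'])

lemma pieceU_iUnion (n : ℕ) : (⋃ t : PieceIdx I 𝒳, pieceU A F y₀ n t) = Set.univ := by
  ext u
  simp only [Set.mem_iUnion, Set.mem_univ, iff_true]
  exact ⟨⟨A n u, A (n+1) u, patchY A F y₀ u n⟩, rfl, rfl, rfl⟩

lemma pieceU_prefix (hAprefix : ∀ k u u', (∀ i < k, u i = u' i) → A k u = A k u')
    (n : ℕ) (t : PieceIdx I 𝒳) (u u' : ℕ → ℝ) (h : ∀ i ≤ n, u i = u' i) :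
    u ∈ pieceU A F y₀ n t ↔ u' ∈ pieceU A F y₀ n t := by
  have hA : A n u = A n u' := hAprefix n u u' fun i hi => h i hi.le
  have hA1 : A (n+1) u = A (n+1) u' := hAprefix (n+1) u u' fun i hi => h i (Nat.lt_succ_iff.mp hi)
  have hY : patchY A F y₀ u n = patchY A F y₀ u' n := patchY_prefix A F y₀ hAprefix n u u' h
  unfold pieceU
  rw [Set.mem_setOf_eq, Set.mem_setOf_eq, hA, hA1, hY]


lemma cyl_split (Λ B : Finset I) (hsub : Λ ⊆ B) (ξ ζ : ∀ x, 𝒳 x) :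
    {σ : ∀ x, 𝒳 x | ∀ x ∈ B, σ x = (if x ∈ B \ Λ then ζ x else ξ x)}
      = {σ | ∀ x ∈ Λ, σ x = ξ x} ∩ {σ | ∀ x ∈ B \ Λ, σ x = ζ x} := by
  ext σ
  simp only [Set.mem_setOf_eq, Set.mem_inter_iff]
  constructor
  · intro h
    refine ⟨fun x hx => ?_, fun x hx => ?_⟩
    · have hx' : x ∉ B \ Λ := by simp [Finset.mem_sdiff, hx]
      have := h x (hsub hx)
      rwa [if_neg hx'] at this
    · have := h x (Finset.mem_sdiff.mp hx).1
      rwa [if_pos hx] at this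
  · rintro ⟨h1, h2⟩ x hx
    by_cases hx' : x ∈ B \ Λ
    · rw [if_pos hx']; exact h2 x hx'
    · rw [if_neg hx']
      have hxΛ : x ∈ Λ := by
        by_contra hc
        exact hx' (Finset.mem_sdiff.mpr ⟨hx, hc⟩)
      exact h1 x hxΛ

variable (X : Ω → ∀ x, 𝒳 x)

lemma patch_positivity [IsProbabilityMeasure μ] (hX : Measurable X)
    (hUmeas : ∀ n, Measurable (U n))
    (hUindep : iIndepFun U μ)
    (hUlaw : ∀ n, μ.map (U n) = volume.restrict (Set.Ico (0:ℝ) 1))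
    (hA0 : ∀ u, A 0 u = ∅)
    (hAmono : ∀ k u, A k u ⊆ A (k + 1) u)
    (hAprefix : ∀ k u u', (∀ i < k, u i = u' i) → A k u = A k u')
    (hAmeas : ∀ k (J : Finset I), MeasurableSet {u : ℕ → ℝ | A k u = J})
    (hFmeas : ∀ Λ J ξ, Measurable (F Λ J ξ))
    (hFlaw : ∀ (Λ J : Finset I), Disjoint Λ J → ∀ ξ : ∀ x, 𝒳 x,
      μ.map X {σ | ∀ x ∈ Λ, σ x = ξ x} ≠ 0 →
      ∀ η : ∀ x, 𝒳 x,
        volume {u ∈ Set.Ico (0:ℝ) 1 | ∀ x ∈ J, F Λ J ξ u x = η x}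
          = (μ.map X)[|{σ | ∀ x ∈ Λ, σ x = ξ x}] {σ | ∀ x ∈ J, σ x = η x}) :
    ∀ k : ℕ, μ {ω | μ.map X {σ | ∀ x ∈ A k (fun j => U j ω),
        σ x = patchY A F y₀ (fun j => U j ω) k x} = 0} = 0 := by
  haveI : IsProbabilityMeasure (μ.map X) := Measure.isProbabilityMeasure_map hX.aemeasurable
  intro k
  induction k with
  | zero =>
    have h0 : {ω : Ω | μ.map X {σ | ∀ x ∈ A 0 (fun j => U j ω),
        σ x = patchY A F y₀ (fun j => U j ω) 0 x} = 0} = ∅ := by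
      ext ω
      simp [hA0]
    rw [h0, measure_empty]
  | succ k ih =>
    set ν := μ.map X with hν
    set W : Ω → ℕ → ℝ := fun ω => fun j => U j ω with hW
    set Bad := {ω : Ω | ν {σ | ∀ x ∈ A (k+1) (W ω), σ x = patchY A F y₀ (W ω) (k+1) x} = 0}
      with hBad
    set BadP := {ω : Ω | ν {σ | ∀ x ∈ A k (W ω), σ x = patchY A F y₀ (W ω) k x} = 0}
      with hBadP
    have hsub : Bad ⊆ BadP ∪ (Bad \ BadP) := fun ω hω => by
      by_cases h : ω ∈ BadP
      · exact Or.inl h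
      · exact Or.inr ⟨hω, h⟩
    have hdiff : μ (Bad \ BadP) = 0 := by
      have hcover : Bad \ BadP ⊆ ⋃ t : PieceIdx I 𝒳,
          (W ⁻¹' pieceU A F y₀ k t ∩ (Bad \ BadP)) := by
        intro ω hω
        refine Set.mem_iUnion.mpr ⟨⟨A k (W ω), A (k+1) (W ω), patchY A F y₀ (W ω) k⟩,
          ⟨⟨rfl, rfl, rfl⟩, hω⟩⟩
      refine measure_mono_null hcover (measure_iUnion_null fun t => ?_)
      obtain ⟨Λ, B, ξ⟩ := t
      by_cases hgood : ν {σ | ∀ x ∈ Λ, σ x = ξ x} = 0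
      · -- on this piece, ω ∈ BadP, so the set is empty
        have : W ⁻¹' pieceU A F y₀ k (Λ, B, ξ) ∩ (Bad \ BadP) = ∅ := by
          ext ω
          simp only [Set.mem_inter_iff, Set.mem_preimage, Set.mem_empty_iff_false, iff_false]
          rintro ⟨⟨h1, h2, h3⟩, _, hnb⟩
          exact hnb (by rw [hBadP, Set.mem_setOf_eq, h1, h3]; exact hgood)
        rw [this, measure_empty]
      by_cases hΛB : Λ ⊆ B
      case neg =>
        have : W ⁻¹' pieceU A F y₀ k (Λ, B, ξ) = ∅ := by
          ext ω
          simp only [Set.mem_preimage, Set.mem_empty_iff_false, iff_false]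
          rintro ⟨h1, h2, h3⟩
          have hm := hAmono k (W ω); rw [h1, h2] at hm; exact hΛB hm
        refine measure_mono_null Set.inter_subset_left ?_
        rw [this, measure_empty]
      -- the main case
      set T₀ : Set ℝ := (F Λ (B \ Λ) ξ) ⁻¹'
        {g : ∀ x, 𝒳 x | ν {σ | ∀ x ∈ B, σ x = (if x ∈ B \ Λ then g x else ξ x)} = 0} with hT₀
      have hT₀meas : MeasurableSet T₀ :=
        hFmeas Λ (B \ Λ) ξ ((Set.to_countable _).measurableSet)
      have hGT : W ⁻¹' pieceU A F y₀ k (Λ, B, ξ) ∩ Bad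
          = W ⁻¹' pieceU A F y₀ k (Λ, B, ξ) ∩ (U (k+1)) ⁻¹' T₀ := by
        ext ω
        simp only [Set.mem_inter_iff, Set.mem_preimage, and_congr_right_iff]
        rintro ⟨h1, h2, h3⟩
        have hY : patchY A F y₀ (W ω) (k+1)
            = fun x => if x ∈ B \ Λ then F Λ (B \ Λ) ξ (U (k+1) ω) x else ξ x := by
          rw [patchY_succ, h1, h2, h3]
        rw [hBad, Set.mem_setOf_eq, h2, hY, hT₀, Set.mem_preimage, Set.mem_setOf_eq]
      have hGform : W ⁻¹' pieceU A F y₀ k (Λ, B, ξ)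
          = {ω : Ω | (fun i : Fin (k+1) => U i ω) ∈
              {v : Fin (k+1) → ℝ | extT v ∈ pieceU A F y₀ k (Λ, B, ξ)}} := by
        ext ω
        simp only [Set.mem_preimage, Set.mem_setOf_eq]
        exact (pieceU_prefix A F y₀ hAprefix k (Λ, B, ξ) (W ω)
          (extT fun i : Fin (k+1) => U i ω)
          (fun i hi => (extT_agree (W ω) i (Nat.lt_succ_of_le hi)).symm))
      have honestep := onestep μ U hUmeas hUindep k
        {v : Fin (k+1) → ℝ | extT v ∈ pieceU A F y₀ k (Λ, B, ξ)}
        ((measurable_extT (k+1)) (measurableSet_pieceU A F y₀ hAmeas hFmeas k (Λ, B, ξ)))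
        T₀ hT₀meas
      have hT₀vol : μ ((U (k+1)) ⁻¹' T₀) = 0 := by
        rw [← Measure.map_apply (hUmeas (k+1)) hT₀meas, hUlaw (k+1),
          Measure.restrict_apply hT₀meas]
        have hcov : T₀ ∩ Set.Ico (0:ℝ) 1 ⊆ ⋃ ζ : ∀ x, 𝒳 x,
            {s : ℝ | ((s ∈ Set.Ico (0:ℝ) 1 ∧ ∀ x ∈ B \ Λ, F Λ (B \ Λ) ξ s x = ζ x) ∧
              ν ({σ | ∀ x ∈ Λ, σ x = ξ x} ∩ {σ | ∀ x ∈ B \ Λ, σ x = ζ x}) = 0)} := by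
          rintro s ⟨hsT, hsI⟩
          refine Set.mem_iUnion.mpr ⟨F Λ (B \ Λ) ξ s, ⟨⟨hsI, fun x _ => rfl⟩, ?_⟩⟩
          rw [← cyl_split Λ B hΛB ξ (F Λ (B \ Λ) ξ s)]
          exact hsT
        refine measure_mono_null hcov (measure_iUnion_null fun ζ => ?_)
        by_cases hz : ν ({σ | ∀ x ∈ Λ, σ x = ξ x} ∩ {σ | ∀ x ∈ B \ Λ, σ x = ζ x}) = 0
        · have hsub2 : {s : ℝ | ((s ∈ Set.Ico (0:ℝ) 1 ∧ ∀ x ∈ B \ Λ, F Λ (B \ Λ) ξ s x = ζ x) ∧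
              ν ({σ | ∀ x ∈ Λ, σ x = ξ x} ∩ {σ | ∀ x ∈ B \ Λ, σ x = ζ x}) = 0)}
              ⊆ {s ∈ Set.Ico (0:ℝ) 1 | ∀ x ∈ B \ Λ, F Λ (B \ Λ) ξ s x = ζ x} := by
            rintro s ⟨⟨h1, h2⟩, _⟩; exact ⟨h1, h2⟩
          refine measure_mono_null hsub2 ?_
          rw [hFlaw Λ (B \ Λ) Finset.disjoint_sdiff ξ hgood ζ,
            cond_apply ((Set.to_countable _).measurableSet) ν, hz, mul_zero]
        · have : {s : ℝ | ((s ∈ Set.Ico (0:ℝ) 1 ∧ ∀ x ∈ B \ Λ, F Λ (B \ Λ) ξ s x = ζ x) ∧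
              ν ({σ | ∀ x ∈ Λ, σ x = ξ x} ∩ {σ | ∀ x ∈ B \ Λ, σ x = ζ x}) = 0)} = ∅ := by
            ext s
            simp only [Set.mem_setOf_eq, Set.mem_empty_iff_false, iff_false, not_and]
            intro _; exact hz
          rw [this, measure_empty]
      refine le_antisymm ?_ zero_le
      calc μ (W ⁻¹' pieceU A F y₀ k (Λ, B, ξ) ∩ (Bad \ BadP))
          ≤ μ (W ⁻¹' pieceU A F y₀ k (Λ, B, ξ) ∩ Bad) :=
            measure_mono (Set.inter_subset_inter_right _ Set.diff_subset)
        _ = μ (W ⁻¹' pieceU A F y₀ k (Λ, B, ξ) ∩ (U (k+1)) ⁻¹' T₀) := by rw [hGT]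
        _ = _ * μ ((U (k+1)) ⁻¹' T₀) := by rw [hGform]; exact honestep
        _ ≤ 0 := by rw [hT₀vol, mul_zero]
    refine le_antisymm ?_ zero_le
    calc μ Bad ≤ μ (BadP ∪ (Bad \ BadP)) := measure_mono hsub
      _ ≤ μ BadP + μ (Bad \ BadP) := measure_union_le _ _
      _ ≤ 0 := by rw [ih, hdiff, add_zero]


lemma ocyl_split (Λ B : Finset I) (hsub : Λ ⊆ B) (ξ η : ∀ x, 𝒳 x) :
    {σ : ∀ x, 𝒳 x | ∀ x ∈ Λ, σ x = ξ x} ∩ {σ | ∀ x ∈ B \ Λ, σ x = η x}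
        ∩ {σ | ∀ x ∉ B, σ x = η x}
      = {σ | ∀ x ∈ Λ, σ x = ξ x} ∩ {σ | ∀ x ∉ Λ, σ x = η x} := by
  ext σ
  simp only [Set.mem_inter_iff, Set.mem_setOf_eq]
  constructor
  · rintro ⟨⟨h1, h2⟩, h3⟩
    refine ⟨h1, fun x hx => ?_⟩
    by_cases hxB : x ∈ B
    · exact h2 x (Finset.mem_sdiff.mpr ⟨hxB, hx⟩)
    · exact h3 x hxB
  · rintro ⟨h1, h2⟩
    exact ⟨⟨h1, fun x hx => h2 x (Finset.mem_sdiff.mp hx).2⟩,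
      fun x hx => h2 x (fun hΛ => hx (hsub hΛ))⟩

lemma setLIntegral_const_of_eq {α : Type*} [MeasurableSpace α] (μ' : Measure α)
    {s : Set α} (hs : MeasurableSet s) {f : α → ℝ≥0∞} {c : ℝ≥0∞} (h : ∀ ω ∈ s, f ω = c) :
    ∫⁻ ω in s, f ω ∂μ' = c * μ' s := by
  rw [lintegral_congr_ae ((ae_restrict_iff' hs).mpr (Filter.Eventually.of_forall h)),
    setLIntegral_const]

lemma key [IsProbabilityMeasure μ] (hX : Measurable X)
    (hUmeas : ∀ n, Measurable (U n))
    (hUindep : iIndepFun U μ)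
    (hUlaw : ∀ n, μ.map (U n) = volume.restrict (Set.Ico (0:ℝ) 1))
    (hA0 : ∀ u, A 0 u = ∅)
    (hAmono : ∀ k u, A k u ⊆ A (k + 1) u)
    (hAprefix : ∀ k u u', (∀ i < k, u i = u' i) → A k u = A k u')
    (hAmeas : ∀ k (J : Finset I), MeasurableSet {u : ℕ → ℝ | A k u = J})
    (Tstar : ℕ) (hT : ∀ k u, Tstar ≤ k → A k u = Finset.univ)
    (hFmeas : ∀ Λ J ξ, Measurable (F Λ J ξ))
    (hFlaw : ∀ (Λ J : Finset I), Disjoint Λ J → ∀ ξ : ∀ x, 𝒳 x,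
      μ.map X {σ | ∀ x ∈ Λ, σ x = ξ x} ≠ 0 →
      ∀ η : ∀ x, 𝒳 x,
        volume {u ∈ Set.Ico (0:ℝ) 1 | ∀ x ∈ J, F Λ J ξ u x = η x}
          = (μ.map X)[|{σ | ∀ x ∈ Λ, σ x = ξ x}] {σ | ∀ x ∈ J, σ x = η x}) :
    ∀ (n : ℕ) (S' : Set (Fin (n+1) → ℝ)), MeasurableSet S' → ∀ η : ∀ x, 𝒳 x,
      μ {ω | (fun i : Fin (n+1) => U i ω) ∈ S' ∧
            ∀ x ∉ A n (fun j => U j ω), patchY A F y₀ (fun j => U j ω) Tstar x = η x}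
        = ∫⁻ ω in {ω | (fun i : Fin (n+1) => U i ω) ∈ S'},
            (μ.map X)[|{σ | ∀ x ∈ A n (fun j => U j ω),
                  σ x = patchY A F y₀ (fun j => U j ω) n x}]
              {σ | ∀ x ∉ A n (fun j => U j ω), σ x = η x} ∂μ := by
  haveI : IsProbabilityMeasure (μ.map X) := Measure.isProbabilityMeasure_map hX.aemeasurable
  have htuple : ∀ m : ℕ, Measurable (fun ω => (fun i : Fin m => U i ω)) :=
    fun m => measurable_pi_lambda _ fun i => hUmeas i
  have hWmeas : Measurable (fun ω : Ω => (fun j => U j ω)) := measurable_pi_lambda _ hUmeas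
  have hYT : ∀ (n : ℕ) (u : ℕ → ℝ) x, x ∈ A (n+1) u →
      patchY A F y₀ u Tstar x = patchY A F y₀ u (n+1) x := by
    intro n u x hx
    rcases le_total (n+1) Tstar with h | h
    · exact patchY_stable A F y₀ hAmono u h x hx
    · rw [patchY_stable_top A F y₀ hAmono hT u h]
  -- base case
  have hbase : ∀ n, Tstar ≤ n → ∀ S' : Set (Fin (n+1) → ℝ), MeasurableSet S' →
      ∀ η : ∀ x, 𝒳 x,
      μ {ω | (fun i : Fin (n+1) => U i ω) ∈ S' ∧
            ∀ x ∉ A n (fun j => U j ω), patchY A F y₀ (fun j => U j ω) Tstar x = η x}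
        = ∫⁻ ω in {ω | (fun i : Fin (n+1) => U i ω) ∈ S'},
            (μ.map X)[|{σ | ∀ x ∈ A n (fun j => U j ω),
                  σ x = patchY A F y₀ (fun j => U j ω) n x}]
              {σ | ∀ x ∉ A n (fun j => U j ω), σ x = η x} ∂μ := by
    intro n hn S' hS' η
    have hAuniv : ∀ u : ℕ → ℝ, A n u = Finset.univ := fun u => hT n u hn
    have hLset : {ω : Ω | (fun i : Fin (n+1) => U i ω) ∈ S' ∧
          ∀ x ∉ A n (fun j => U j ω), patchY A F y₀ (fun j => U j ω) Tstar x = η x}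
        = {ω : Ω | (fun i : Fin (n+1) => U i ω) ∈ S'} := by
      ext ω
      simp only [Set.mem_setOf_eq, and_iff_left_iff_imp]
      intro _ x hx
      exact absurd (by rw [hAuniv]; exact Finset.mem_univ x) hx
    have hae : ∀ᵐ ω ∂μ,
        (μ.map X)[|{σ | ∀ x ∈ A n (fun j => U j ω),
              σ x = patchY A F y₀ (fun j => U j ω) n x}]
          {σ | ∀ x ∉ A n (fun j => U j ω), σ x = η x} = 1 := by
      have hpos := patch_positivity A F y₀ μ U X hX hUmeas hUindep hUlaw hA0 hAmono
        hAprefix hAmeas hFmeas hFlaw n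
      have hae0 : ∀ᵐ ω ∂μ, μ.map X {σ | ∀ x ∈ A n (fun j => U j ω),
          σ x = patchY A F y₀ (fun j => U j ω) n x} ≠ 0 := by
        rw [MeasureTheory.ae_iff]
        simpa using hpos
      refine hae0.mono fun ω hω => ?_
      have hoc : {σ : ∀ x, 𝒳 x | ∀ x ∉ A n (fun j => U j ω), σ x = η x} = Set.univ := by
        ext σ
        simp only [Set.mem_setOf_eq, Set.mem_univ, iff_true]
        intro x hx
        exact absurd (by rw [hAuniv]; exact Finset.mem_univ x) hx
      rw [hoc, cond_apply ((Set.to_countable _).measurableSet), Set.inter_univ]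
      exact ENNReal.inv_mul_cancel hω (measure_ne_top _ _)
    rw [hLset]
    symm
    calc ∫⁻ ω in {ω : Ω | (fun i : Fin (n+1) => U i ω) ∈ S'},
          (μ.map X)[|{σ | ∀ x ∈ A n (fun j => U j ω),
                σ x = patchY A F y₀ (fun j => U j ω) n x}]
            {σ | ∀ x ∉ A n (fun j => U j ω), σ x = η x} ∂μ
        = ∫⁻ _ω in {ω : Ω | (fun i : Fin (n+1) => U i ω) ∈ S'}, 1 ∂μ :=
          lintegral_congr_ae (ae_restrict_of_ae hae)
      _ = μ {ω : Ω | (fun i : Fin (n+1) => U i ω) ∈ S'} := setLIntegral_one _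
  -- downward induction
  suffices H : ∀ (m n : ℕ), Tstar ≤ n + m → ∀ S' : Set (Fin (n+1) → ℝ), MeasurableSet S' →
      ∀ η : ∀ x, 𝒳 x,
      μ {ω | (fun i : Fin (n+1) => U i ω) ∈ S' ∧
            ∀ x ∉ A n (fun j => U j ω), patchY A F y₀ (fun j => U j ω) Tstar x = η x}
        = ∫⁻ ω in {ω | (fun i : Fin (n+1) => U i ω) ∈ S'},
            (μ.map X)[|{σ | ∀ x ∈ A n (fun j => U j ω),
                  σ x = patchY A F y₀ (fun j => U j ω) n x}]
              {σ | ∀ x ∉ A n (fun j => U j ω), σ x = η x} ∂μ by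
    exact fun n S' hS' η => H Tstar n (Nat.le_add_left _ _) S' hS' η
  intro m
  induction m with
  | zero => exact fun n hn => hbase n (by omega)
  | succ m ihm =>
    intro n hn S' hS' η
    by_cases hb : Tstar ≤ n
    · exact hbase n hb S' hS' η
    -- inductive step: n < Tstar
    have hRmeas : MeasurableSet {u : ℕ → ℝ | ∀ x ∈ A (n+1) u \ A n u,
        patchY A F y₀ u (n+1) x = η x} :=
      measurableSet_pattern A F y₀ hAmeas hFmeas n (n+1) (n+1)
        (fun Λ B ζ => ∀ x ∈ B \ Λ, ζ x = η x)
    set R : Set (ℕ → ℝ) := {u | ∀ x ∈ A (n+1) u \ A n u, patchY A F y₀ u (n+1) x = η x}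
      with hRdef
    set S'' : Set (Fin (n+1+1) → ℝ) :=
      {v | (fun i : Fin (n+1) => v i.castSucc) ∈ S' ∧ extT v ∈ R} with hS''def
    have hS''meas : MeasurableSet S'' :=
      ((measurable_pi_lambda _ fun i : Fin (n+1) => measurable_pi_apply _) hS').inter
        ((measurable_extT (n+2)) hRmeas)
    have hRiff : ∀ u u' : ℕ → ℝ, (∀ i ≤ n+1, u i = u' i) → (u ∈ R ↔ u' ∈ R) := by
      intro u u' h
      have hA1 : A n u = A n u' := hAprefix n u u' fun i hi => h i (by omega)
      have hA2 : A (n+1) u = A (n+1) u' := hAprefix (n+1) u u' fun i hi => h i (by omega)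
      have hY : patchY A F y₀ u (n+1) = patchY A F y₀ u' (n+1) :=
        patchY_prefix A F y₀ hAprefix (n+1) u u' h
      rw [hRdef]
      simp only [Set.mem_setOf_eq]
      rw [hA1, hA2, hY]
    have hcast : ∀ ω : Ω, (fun i : Fin (n+1) => (fun i : Fin (n+1+1) => U i ω) i.castSucc)
        = fun i : Fin (n+1) => U i ω := by
      intro ω; funext i; rfl
    have hS''event : {ω : Ω | (fun i : Fin (n+1+1) => U i ω) ∈ S''}
        = {ω | (fun i : Fin (n+1) => U i ω) ∈ S'} ∩ (fun ω : Ω => fun j => U j ω) ⁻¹' R := by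
      ext ω
      rw [hS''def]
      simp only [Set.mem_setOf_eq, Set.mem_inter_iff, Set.mem_preimage]
      rw [hcast ω]
      refine and_congr_right fun _ => ?_
      exact hRiff _ _ fun i hi => extT_agree (fun j => U j ω) i (by omega)
    have hiff : ∀ u : ℕ → ℝ, (∀ x ∉ A n u, patchY A F y₀ u Tstar x = η x)
        ↔ (u ∈ R ∧ ∀ x ∉ A (n+1) u, patchY A F y₀ u Tstar x = η x) := by
      intro u
      constructor
      · intro h
        refine ⟨fun x hx => ?_, fun x hx => h x (fun hmem => hx (hAmono n u hmem))⟩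
        have hx2 := Finset.mem_sdiff.mp hx
        rw [← hYT n u x hx2.1]
        exact h x hx2.2
      · rintro ⟨h1, h2⟩ x hx
        by_cases hx1 : x ∈ A (n+1) u
        · rw [hYT n u x hx1]
          exact h1 x (Finset.mem_sdiff.mpr ⟨hx1, hx⟩)
        · exact h2 x hx1
    have hsplit : {ω : Ω | (fun i : Fin (n+1) => U i ω) ∈ S' ∧
          ∀ x ∉ A n (fun j => U j ω), patchY A F y₀ (fun j => U j ω) Tstar x = η x}
        = {ω : Ω | (fun i : Fin (n+1+1) => U i ω) ∈ S'' ∧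
          ∀ x ∉ A (n+1) (fun j => U j ω), patchY A F y₀ (fun j => U j ω) Tstar x = η x} := by
      ext ω
      simp only [Set.mem_setOf_eq]
      rw [hiff (fun j => U j ω)]
      have : ((fun i : Fin (n+1+1) => U i ω) ∈ S'') ↔
          ((fun i : Fin (n+1) => U i ω) ∈ S' ∧ (fun j => U j ω) ∈ R) := by
        have := Set.ext_iff.mp hS''event ω
        simpa using this
      rw [this]
      tauto
    rw [hsplit, ihm (n+1) (by omega) S'' hS''meas η, hS''event]
    -- decomposition over pieces
    set ES := {ω : Ω | (fun i : Fin (n+1) => U i ω) ∈ S'} with hESdef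
    have hESmeas : MeasurableSet ES := htuple (n+1) hS'
    set GP : PieceIdx I 𝒳 → Set Ω :=
      fun t => (fun ω : Ω => fun j => U j ω) ⁻¹' pieceU A F y₀ n t with hGPdef
    have hGPmeas : ∀ t, MeasurableSet (GP t) :=
      fun t => hWmeas (measurableSet_pieceU A F y₀ hAmeas hFmeas n t)
    have hGPdisj : Pairwise (Function.onFun Disjoint GP) :=
      fun t t' h => (pieceU_disjoint A F y₀ n h).preimage _
    have hGPunion : (⋃ t, GP t) = Set.univ := by
      rw [hGPdef, ← Set.preimage_iUnion, pieceU_iUnion, Set.preimage_univ]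
    have hdecomp : ∀ (D : Set Ω), MeasurableSet D → ∀ f : Ω → ℝ≥0∞,
        ∫⁻ ω in D, f ω ∂μ = ∑' t : PieceIdx I 𝒳, ∫⁻ ω in D ∩ GP t, f ω ∂μ := by
      intro D hD f
      have hDeq : D = ⋃ t, (D ∩ GP t) := by
        rw [← Set.inter_iUnion, hGPunion, Set.inter_univ]
      nth_rewrite 1 [hDeq]
      exact lintegral_iUnion (fun t => hD.inter (hGPmeas t))
        (fun t t' h => ((hGPdisj h).mono Set.inter_subset_right Set.inter_subset_right)) f
    rw [hdecomp (ES ∩ (fun ω : Ω => fun j => U j ω) ⁻¹' R) (hESmeas.inter (hWmeas hRmeas)) _,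
      hdecomp ES hESmeas _]
    refine tsum_congr fun t => ?_
    obtain ⟨Λ, B, ξ⟩ := t
    by_cases hΛB : Λ ⊆ B
    case neg =>
      have hGPemp : GP (Λ, B, ξ) = ∅ := by
        rw [hGPdef]
        ext ω
        simp only [Set.mem_preimage, Set.mem_empty_iff_false, iff_false]
        rintro ⟨h1, h2, h3⟩
        have hm := hAmono n (fun j => U j ω); rw [h1, h2] at hm; exact hΛB hm
      rw [hGPemp, Set.inter_empty, Set.inter_empty]
      simp
    -- main case Λ ⊆ B
    set T : Set ℝ := {s : ℝ | ∀ x ∈ B \ Λ, F Λ (B \ Λ) ξ s x = η x} with hTdef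
    have hTmeas : MeasurableSet T :=
      hFmeas Λ (B \ Λ) ξ ((Set.to_countable {g : ∀ x, 𝒳 x | ∀ x ∈ B \ Λ, g x = η x}).measurableSet)
    have hYeq : ∀ ω : Ω, (fun j => U j ω) ∈ pieceU A F y₀ n (Λ, B, ξ) →
        patchY A F y₀ (fun j => U j ω) (n+1)
          = fun x => if x ∈ B \ Λ then F Λ (B \ Λ) ξ (U (n+1) ω) x else ξ x := by
      rintro ω ⟨h1, h2, h3⟩
      rw [patchY_succ, h1, h2, h3]
    have hRT : ∀ ω : Ω, (fun j => U j ω) ∈ pieceU A F y₀ n (Λ, B, ξ) →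
        ((fun j => U j ω) ∈ R ↔ U (n+1) ω ∈ T) := by
      rintro ω hp
      obtain ⟨h1, h2, h3⟩ := hp
      rw [hRdef, hTdef]
      simp only [Set.mem_setOf_eq]
      rw [h1, h2, hYeq ω ⟨h1, h2, h3⟩]
      constructor
      · intro h x hx
        have h' := h x hx
        simp only [if_pos hx] at h'
        exact h'
      · intro h x hx
        simp only [if_pos hx]
        exact h x hx
    have hdom : (ES ∩ (fun ω : Ω => fun j => U j ω) ⁻¹' R) ∩ GP (Λ, B, ξ)
        = (ES ∩ GP (Λ, B, ξ)) ∩ (U (n+1)) ⁻¹' T := by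
      ext ω
      simp only [Set.mem_inter_iff, Set.mem_preimage, hGPdef]
      constructor
      · rintro ⟨⟨hs, hr⟩, hp⟩
        exact ⟨⟨hs, hp⟩, (hRT ω hp).mp hr⟩
      · rintro ⟨⟨hs, hp⟩, ht⟩
        exact ⟨⟨hs, (hRT ω hp).mpr ht⟩, hp⟩
    -- constants
    have hKn : ∀ ω ∈ ES ∩ GP (Λ, B, ξ),
        (μ.map X)[|{σ | ∀ x ∈ A n (fun j => U j ω),
              σ x = patchY A F y₀ (fun j => U j ω) n x}]
            {σ | ∀ x ∉ A n (fun j => U j ω), σ x = η x}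
        = (μ.map X)[|{σ | ∀ x ∈ Λ, σ x = ξ x}] {σ | ∀ x ∉ Λ, σ x = η x} := by
      rintro ω ⟨-, h1, h2, h3⟩
      rw [h1, h3]
    have hKn1 : ∀ ω ∈ (ES ∩ GP (Λ, B, ξ)) ∩ (U (n+1)) ⁻¹' T,
        (μ.map X)[|{σ | ∀ x ∈ A (n+1) (fun j => U j ω),
              σ x = patchY A F y₀ (fun j => U j ω) (n+1) x}]
            {σ | ∀ x ∉ A (n+1) (fun j => U j ω), σ x = η x}
        = (μ.map X)[|{σ | ∀ x ∈ Λ, σ x = ξ x} ∩ {σ | ∀ x ∈ B \ Λ, σ x = η x}]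
            {σ | ∀ x ∉ B, σ x = η x} := by
      rintro ω ⟨⟨-, hp⟩, ht⟩
      obtain ⟨h1, h2, h3⟩ := hp
      have hcset : {σ : ∀ x, 𝒳 x | ∀ x ∈ A (n+1) (fun j => U j ω),
            σ x = patchY A F y₀ (fun j => U j ω) (n+1) x}
          = {σ | ∀ x ∈ Λ, σ x = ξ x} ∩ {σ | ∀ x ∈ B \ Λ, σ x = η x} := by
        rw [h2, hYeq ω ⟨h1, h2, h3⟩]
        have hsplit2 := cyl_split Λ B hΛB ξ (F Λ (B \ Λ) ξ (U (n+1) ω))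
        have h2nd : {σ : ∀ x, 𝒳 x | ∀ x ∈ B \ Λ, σ x = F Λ (B \ Λ) ξ (U (n+1) ω) x}
            = {σ | ∀ x ∈ B \ Λ, σ x = η x} := by
          ext σ
          simp only [Set.mem_setOf_eq]
          exact forall₂_congr fun x hx => by rw [ht x hx]
        rw [← h2nd, ← hsplit2]
      rw [hcset, h2]
    -- the one-step independence computation
    have honest : μ ((ES ∩ GP (Λ, B, ξ)) ∩ (U (n+1)) ⁻¹' T)
        = μ (ES ∩ GP (Λ, B, ξ)) * μ ((U (n+1)) ⁻¹' T) := by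
      have hform : ES ∩ GP (Λ, B, ξ) = {ω : Ω | (fun i : Fin (n+1) => U i ω) ∈
          (S' ∩ {v : Fin (n+1) → ℝ | extT v ∈ pieceU A F y₀ n (Λ, B, ξ)})} := by
        ext ω
        simp only [hESdef, hGPdef, Set.mem_inter_iff, Set.mem_setOf_eq, Set.mem_preimage]
        refine and_congr_right fun _ => ?_
        exact pieceU_prefix A F y₀ hAprefix n (Λ, B, ξ) _ _
          (fun i hi => (extT_agree (fun j => U j ω) i (by omega)).symm)
      rw [hform]
      exact onestep μ U hUmeas hUindep n _
        (hS'.inter ((measurable_extT (n+1)) (measurableSet_pieceU A F y₀ hAmeas hFmeas n _)))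
        T hTmeas
    have hvol : μ ((U (n+1)) ⁻¹' T) = volume (T ∩ Set.Ico (0:ℝ) 1) := by
      rw [← Measure.map_apply (hUmeas (n+1)) hTmeas, hUlaw (n+1),
        Measure.restrict_apply hTmeas]
    rw [hdom,
      setLIntegral_const_of_eq μ ((hESmeas.inter (hGPmeas _)).inter ((hUmeas (n+1)) hTmeas)) hKn1,
      setLIntegral_const_of_eq μ (hESmeas.inter (hGPmeas _)) hKn,
      honest, hvol]
    -- now pure measure arithmetic
    set ν := μ.map X with hνdef
    set a := ν {σ | ∀ x ∈ Λ, σ x = ξ x} with hadef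
    set b := ν ({σ | ∀ x ∈ Λ, σ x = ξ x} ∩ {σ | ∀ x ∈ B \ Λ, σ x = η x}) with hbdef
    set d := ν ({σ | ∀ x ∈ Λ, σ x = ξ x} ∩ {σ | ∀ x ∉ Λ, σ x = η x}) with hddef
    have hmsA : MeasurableSet {σ : ∀ x, 𝒳 x | ∀ x ∈ Λ, σ x = ξ x} :=
      (Set.to_countable _).measurableSet
    have hmsAB : MeasurableSet ({σ : ∀ x, 𝒳 x | ∀ x ∈ Λ, σ x = ξ x}
        ∩ {σ | ∀ x ∈ B \ Λ, σ x = η x}) := (Set.to_countable _).measurableSet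
    have hdb : d ≤ b := by
      rw [hbdef, hddef]
      refine measure_mono (Set.inter_subset_inter_right _ ?_)
      intro σ hσ x hx
      exact hσ x (Finset.mem_sdiff.mp hx).2
    have hκ : (ν[|{σ | ∀ x ∈ Λ, σ x = ξ x}] {σ | ∀ x ∉ Λ, σ x = η x}) = a⁻¹ * d := by
      rw [cond_apply hmsA]
    have hcval : (ν[|{σ | ∀ x ∈ Λ, σ x = ξ x} ∩ {σ | ∀ x ∈ B \ Λ, σ x = η x}]
        {σ | ∀ x ∉ B, σ x = η x}) = b⁻¹ * d := by
      rw [cond_apply hmsAB]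
      congr 1
      rw [hddef]
      congr 1
      exact ocyl_split Λ B hΛB ξ η
    rw [hκ, hcval]
    by_cases ha0 : a = 0
    · have hd0 : d = 0 := by
        refine le_antisymm ?_ zero_le
        rw [← ha0, hadef, hddef]
        exact measure_mono Set.inter_subset_left
      simp [hd0]
    · have hvol2 : volume (T ∩ Set.Ico (0:ℝ) 1)
          = ν[|{σ | ∀ x ∈ Λ, σ x = ξ x}] {σ | ∀ x ∈ B \ Λ, σ x = η x} := by
        rw [← hFlaw Λ (B \ Λ) Finset.disjoint_sdiff ξ ha0 η]
        congr 1
        ext s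
        rw [hTdef]
        simp only [Set.mem_inter_iff, Set.mem_setOf_eq, Set.mem_Ico]
        tauto
      rw [hvol2, cond_apply hmsA, ← hbdef]
      by_cases hb0 : b = 0
      · have hd0 : d = 0 := le_antisymm (hb0 ▸ hdb) zero_le
        simp [hb0, hd0]
      · have hbinv : b⁻¹ * b = 1 := ENNReal.inv_mul_cancel hb0 (measure_ne_top _ _)
        calc b⁻¹ * d * (μ (ES ∩ GP (Λ, B, ξ)) * (a⁻¹ * b))
            = (a⁻¹ * d) * μ (ES ∩ GP (Λ, B, ξ)) * (b⁻¹ * b) := by ring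
          _ = a⁻¹ * d * μ (ES ∩ GP (Λ, B, ξ)) := by rw [hbinv, mul_one]



end aux

/-- **Conditional law of the unexplored part at a deterministic time.**
In the patch exploration setting, for every deterministic `n ≥ 0`, the conditional law of
`Y_{I ∖ 𝒜_n}` given `U_0, …, U_{n-1}` is a.s. the conditional law of `X_{I ∖ 𝒜_n}` given
`X_{𝒜_n} = Y_{𝒜_n}`. This is expressed in integrated form: for every measurable set `S`
of values of `(U_0, …, U_{n-1})` and every configuration `η`,
`P((U_0,…,U_{n-1}) ∈ S, Y = η off 𝒜_n) = ∫_{(U_0,…,U_{n-1}) ∈ S} P(X = η off 𝒜_n | X = Y on 𝒜_n) dP`. -/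
theorem stmt8 {I : Type*} [Fintype I] [DecidableEq I]
    {𝒳 : I → Type*} [∀ x, Fintype (𝒳 x)] [∀ x, MeasurableSpace (𝒳 x)]
    [∀ x, DiscreteMeasurableSpace (𝒳 x)]
    {Ω : Type*} [MeasurableSpace Ω] (μ : Measure Ω) [IsProbabilityMeasure μ]
    (X : Ω → ∀ x, 𝒳 x) (hX : Measurable X)
    (U : ℕ → Ω → ℝ) (hUmeas : ∀ n, Measurable (U n))
    (hUindep : iIndepFun U μ)
    (hUlaw : ∀ n, μ.map (U n) = volume.restrict (Set.Ico (0:ℝ) 1))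
    (A : ℕ → (ℕ → ℝ) → Finset I)
    (hA0 : ∀ u, A 0 u = ∅)
    (hAmono : ∀ k u, A k u ⊆ A (k + 1) u)
    (hAprefix : ∀ k u u', (∀ i < k, u i = u' i) → A k u = A k u')
    (hAmeas : ∀ k (J : Finset I), MeasurableSet {u : ℕ → ℝ | A k u = J})
    (Tstar : ℕ) (hT : ∀ k u, Tstar ≤ k → A k u = Finset.univ)
    (F : Finset I → Finset I → (∀ x, 𝒳 x) → ℝ → ∀ x, 𝒳 x)
    (hFmeas : ∀ Λ J ξ, Measurable (F Λ J ξ))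
    (hFrestrict : ∀ Λ J ξ ξ', (∀ x ∈ Λ, ξ x = ξ' x) → F Λ J ξ = F Λ J ξ')
    (hFlaw : ∀ (Λ J : Finset I), Disjoint Λ J → ∀ ξ : ∀ x, 𝒳 x,
      μ.map X {σ | ∀ x ∈ Λ, σ x = ξ x} ≠ 0 →
      ∀ η : ∀ x, 𝒳 x,
        volume {u ∈ Set.Ico (0:ℝ) 1 | ∀ x ∈ J, F Λ J ξ u x = η x}
          = (μ.map X)[|{σ | ∀ x ∈ Λ, σ x = ξ x}] {σ | ∀ x ∈ J, σ x = η x})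
    (y₀ : ∀ x, 𝒳 x) :
    ∀ (n : ℕ) (S : Set (Fin n → ℝ)), MeasurableSet S → ∀ η : ∀ x, 𝒳 x,
      μ {ω | (fun i : Fin n => U i ω) ∈ S ∧
            ∀ x ∉ A n (fun j => U j ω), patchY A F y₀ (fun j => U j ω) Tstar x = η x}
        = ∫⁻ ω in {ω | (fun i : Fin n => U i ω) ∈ S},
            (μ.map X)[|{σ | ∀ x ∈ A n (fun j => U j ω),
                  σ x = patchY A F y₀ (fun j => U j ω) n x}]
              {σ | ∀ x ∉ A n (fun j => U j ω), σ x = η x} ∂μ := by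
  intro n S hS η
  have h := key A F y₀ μ U X hX hUmeas hUindep hUlaw hA0 hAmono hAprefix hAmeas Tstar hT
    hFmeas hFlaw n
    ((fun v : Fin (n+1) → ℝ => fun i : Fin n => v i.castSucc) ⁻¹' S)
    ((measurable_pi_lambda _ fun i => measurable_pi_apply _) hS) η
  have hfun : ∀ ω : Ω, (fun i : Fin n => (fun i : Fin (n+1) => U i ω) i.castSucc)
      = fun i : Fin n => U i ω := fun ω => funext fun i => rfl
  have h1 : {ω : Ω | (fun i : Fin (n+1) => U i ω) ∈
        ((fun v : Fin (n+1) → ℝ => fun i : Fin n => v i.castSucc) ⁻¹' S) ∧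
        ∀ x ∉ A n (fun j => U j ω), patchY A F y₀ (fun j => U j ω) Tstar x = η x}
      = {ω : Ω | (fun i : Fin n => U i ω) ∈ S ∧
        ∀ x ∉ A n (fun j => U j ω), patchY A F y₀ (fun j => U j ω) Tstar x = η x} := by
    ext ω
    simp only [Set.mem_setOf_eq, Set.mem_preimage, hfun ω]
  have h2 : {ω : Ω | (fun i : Fin (n+1) => U i ω) ∈
        ((fun v : Fin (n+1) → ℝ => fun i : Fin n => v i.castSucc) ⁻¹' S)}
      = {ω : Ω | (fun i : Fin n => U i ω) ∈ S} := by
    ext ω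
    simp only [Set.mem_setOf_eq, Set.mem_preimage, hfun ω]
  rw [h1, h2] at h
  exact h


end
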